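/- Let M ∈ ℂ^{n₁×n₂} with tangent space T_M at its rank-r SVD, and suppose: (i) γ‖Z‖₂ ≤ ‖A(Z)‖₂ for all Z ∈ T_M with γ > 0; (ii) there exists z ∈ ℂ^m with Y = A*z satisfying α₁ = ‖UV* - P_{T_M}Y‖₂ and α₂ = ‖P_{T_M^⊥}Y‖ < 1; (iii) α₁‖A‖ < (1-α₂)γ. Then for every M̂: ‖M̂ - M‖₂ ≤ (γ + ‖A‖)/((1-α₂)γ - α₁‖A‖) · [‖M̂‖₁ - ‖M‖₁ + ((α₁ + 1 - α₂)/(γ + ‖A‖) + ‖z‖₂)·‖A(M̂ - M)‖₂]. -/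

import Mathlib

open Matrix Finset

/-- singular values of a complex matrix, in decreasing order -/
noncomputable def singVals {n₁ n₂ : ℕ} (M : Matrix (Fin n₁) (Fin n₂) ℂ) :
    Fin n₂ → ℝ :=
  let f : Fin n₂ → ℝ :=
    fun j => Real.sqrt ((Matrix.isHermitian_conjTranspose_mul_self M).eigenvalues j)
  fun j => (f ∘ Tuple.sort f) (Fin.rev j)

/-- nuclear norm -/
noncomputable def nucNorm {n₁ n₂ : ℕ} (M : Matrix (Fin n₁) (Fin n₂) ℂ) : ℝ :=
  ∑ j, singVals M j

/-- Frobenius norm -/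
noncomputable def frobNorm {n₁ n₂ : ℕ} (M : Matrix (Fin n₁) (Fin n₂) ℂ) : ℝ :=
  Real.sqrt (∑ i, ∑ j, ‖M i j‖ ^ 2)

noncomputable def l2norm {m : ℕ} (x : Fin m → ℂ) : ℝ :=
  Real.sqrt (∑ i, ‖x i‖ ^ 2)

def tangentSpace {n₁ n₂ r : ℕ} (U : Matrix (Fin n₁) (Fin r) ℂ)
    (V : Matrix (Fin n₂) (Fin r) ℂ) : Set (Matrix (Fin n₁) (Fin n₂) ℂ) :=
  {Z | ∃ (B₁ : Matrix (Fin n₂) (Fin r) ℂ) (B₂ : Matrix (Fin n₁) (Fin r) ℂ),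
    Z = U * B₁ᴴ + B₂ * Vᴴ}

/-- orthogonal projection onto the tangent space -/
noncomputable def projT {n₁ n₂ r : ℕ} (U : Matrix (Fin n₁) (Fin r) ℂ)
    (V : Matrix (Fin n₂) (Fin r) ℂ) (Z : Matrix (Fin n₁) (Fin n₂) ℂ) :
    Matrix (Fin n₁) (Fin n₂) ℂ :=
  U * Uᴴ * Z + Z * (V * Vᴴ) - U * Uᴴ * Z * (V * Vᴴ)

set_option maxHeartbeats 1000000

noncomputable def toE {n₁ n₂ : ℕ} (X : Matrix (Fin n₁) (Fin n₂) ℂ) :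
    EuclideanSpace ℂ (Fin n₁ × Fin n₂) := WithLp.toLp 2 (fun p => X p.1 p.2)

noncomputable def toV {m : ℕ} (x : Fin m → ℂ) : EuclideanSpace ℂ (Fin m) := WithLp.toLp 2 x

lemma frob_eq_norm {n₁ n₂ : ℕ} (X : Matrix (Fin n₁) (Fin n₂) ℂ) :
    frobNorm X = ‖toE X‖ := by
  rw [EuclideanSpace.norm_eq, frobNorm]
  congr 1
  rw [Fintype.sum_prod_type]
  simp [toE]

lemma l2_eq_norm {m : ℕ} (x : Fin m → ℂ) : l2norm x = ‖toV x‖ := by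
  rw [EuclideanSpace.norm_eq, l2norm]
  simp [toV]

lemma toE_add {n₁ n₂ : ℕ} (X Z : Matrix (Fin n₁) (Fin n₂) ℂ) :
    toE (X + Z) = toE X + toE Z := rfl

lemma frob_nonneg {n₁ n₂ : ℕ} (X : Matrix (Fin n₁) (Fin n₂) ℂ) : 0 ≤ frobNorm X :=
  Real.sqrt_nonneg _

lemma l2_nonneg {m : ℕ} (x : Fin m → ℂ) : 0 ≤ l2norm x := Real.sqrt_nonneg _

lemma frob_add_le {n₁ n₂ : ℕ} (X Z : Matrix (Fin n₁) (Fin n₂) ℂ) :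
    frobNorm (X + Z) ≤ frobNorm X + frobNorm Z := by
  rw [frob_eq_norm, frob_eq_norm, frob_eq_norm, toE_add]; exact norm_add_le _ _

lemma l2_add_le {m : ℕ} (x y : Fin m → ℂ) :
    l2norm (x + y) ≤ l2norm x + l2norm y := by
  rw [l2_eq_norm, l2_eq_norm, l2_eq_norm]; exact norm_add_le (toV x) (toV y)

lemma l2_smul {m : ℕ} (c : ℂ) (x : Fin m → ℂ) :
    l2norm (c • x) = ‖c‖ * l2norm x := by
  rw [l2_eq_norm, l2_eq_norm]
  exact norm_smul c (toV x)

lemma frob_smul {n₁ n₂ : ℕ} (c : ℂ) (X : Matrix (Fin n₁) (Fin n₂) ℂ) :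
    frobNorm (c • X) = ‖c‖ * frobNorm X := by
  rw [frob_eq_norm, frob_eq_norm]
  exact norm_smul c (toE X)

lemma trace_eq_inner {n₁ n₂ : ℕ} (X Z : Matrix (Fin n₁) (Fin n₂) ℂ) :
    Matrix.trace (Xᴴ * Z) = @inner ℂ _ _ (toE X) (toE Z) := by
  rw [Matrix.trace, PiLp.inner_apply]
  rw [Fintype.sum_prod_type]
  simp [Matrix.diag, Matrix.mul_apply, toE, RCLike.inner_apply, mul_comm]
  rw [Finset.sum_comm]

lemma abs_trace_le {n₁ n₂ : ℕ} (X Z : Matrix (Fin n₁) (Fin n₂) ℂ) :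
    ‖Matrix.trace (Xᴴ * Z)‖ ≤ frobNorm X * frobNorm Z := by
  rw [trace_eq_inner, frob_eq_norm, frob_eq_norm]
  exact norm_inner_le_norm _ _

lemma re_trace_ge {n₁ n₂ : ℕ} (X Z : Matrix (Fin n₁) (Fin n₂) ℂ) :
    -(frobNorm X * frobNorm Z) ≤ (Matrix.trace (Xᴴ * Z)).re := by
  have h1 := abs_trace_le X Z
  have h2 := Complex.abs_re_le_norm (Matrix.trace (Xᴴ * Z))
  cases abs_le.1 (h2.trans h1); assumption


noncomputable def vnsq {m : ℕ} (x : Fin m → ℂ) : ℝ := ∑ i, ‖x i‖ ^ 2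


lemma l2_eq_sqrt_vnsq {m : ℕ} (x : Fin m → ℂ) : l2norm x = Real.sqrt (vnsq x) := rfl

lemma vnsq_nonneg {m : ℕ} (x : Fin m → ℂ) : 0 ≤ vnsq x :=
  Finset.sum_nonneg fun _ _ => sq_nonneg _


lemma star_mul_self_eq {z : ℂ} : star z * z = ((‖z‖ ^ 2 : ℝ) : ℂ) := by
  rw [Complex.sq_norm, Complex.star_def, ← Complex.mul_conj, mul_comm]

lemma star_dot_self {m : ℕ} (x : Fin m → ℂ) :
    star x ⬝ᵥ x = (vnsq x : ℂ) := by
  simp only [dotProduct, vnsq, Pi.star_apply]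
  rw [Complex.ofReal_sum]
  exact Finset.sum_congr rfl fun i _ => star_mul_self_eq

lemma cs_dot {m : ℕ} (x y : Fin m → ℂ) :
    ‖star x ⬝ᵥ y‖ ≤ l2norm x * l2norm y := by
  have h : star x ⬝ᵥ y = @inner ℂ _ _ (toV x) (toV y) := by
    simp [dotProduct, PiLp.inner_apply, toV, RCLike.inner_apply, mul_comm]
  have h2 : l2norm x = ‖toV x‖ := by
    rw [EuclideanSpace.norm_eq, l2norm]; simp [toV]
  have h3 : l2norm y = ‖toV y‖ := by
    rw [EuclideanSpace.norm_eq, l2norm]; simp [toV]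
  rw [h, h2, h3]
  exact norm_inner_le_norm _ _

lemma cs_sum {m : ℕ} (x z : Fin m → ℂ) :
    ‖∑ j, x j * (starRingEnd ℂ) (z j)‖ ≤ l2norm z * l2norm x := by
  have h : ∑ j, x j * (starRingEnd ℂ) (z j) = star z ⬝ᵥ x := by
    simp [dotProduct, mul_comm]
  rw [h]; exact cs_dot z x

/-- quadratic form with a diagonal matrix conjugated by W -/
lemma quad_diag {n : ℕ} (W : Matrix (Fin n) (Fin n) ℂ) (t : Fin n → ℝ)
    (v : Fin n → ℂ) :
    star v ⬝ᵥ ((W * Matrix.diagonal (fun j => (t j : ℂ)) * Wᴴ) *ᵥ v) =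
      ((∑ j, t j * ‖(Wᴴ *ᵥ v) j‖ ^ 2 : ℝ) : ℂ) := by
  set c := Wᴴ *ᵥ v with hc
  have h1 : (W * Matrix.diagonal (fun j => (t j : ℂ)) * Wᴴ) *ᵥ v
      = W *ᵥ (Matrix.diagonal (fun j => (t j : ℂ)) *ᵥ c) := by
    rw [hc, ← mulVec_mulVec, ← mulVec_mulVec]
  rw [h1, dotProduct_mulVec]
  have h2 : star v ᵥ* W = star c := by
    rw [hc, star_mulVec, conjTranspose_conjTranspose]
  rw [h2]
  simp only [dotProduct, mulVec_diagonal, Pi.star_apply]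
  rw [Complex.ofReal_sum]
  refine Finset.sum_congr rfl fun j _ => ?_
  rw [Complex.ofReal_mul, ← star_mul_self_eq]
  ring

lemma vnsq_mulVec {n₁ n₂ : ℕ} (G : Matrix (Fin n₁) (Fin n₂) ℂ) (v : Fin n₂ → ℂ) :
    (vnsq (G *ᵥ v) : ℂ) = star v ⬝ᵥ ((Gᴴ * G) *ᵥ v) := by
  rw [← star_dot_self]
  calc star (G *ᵥ v) ⬝ᵥ (G *ᵥ v) = star v ⬝ᵥ (Gᴴ *ᵥ (G *ᵥ v)) := by
        rw [star_mulVec]; exact (dotProduct_mulVec _ _ _).symm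
    _ = star v ⬝ᵥ ((Gᴴ * G) *ᵥ v) := by rw [mulVec_mulVec]

section SVD
variable {n₁ n₂ : ℕ} (X : Matrix (Fin n₁) (Fin n₂) ℂ)

noncomputable def eigW : Matrix (Fin n₂) (Fin n₂) ℂ :=
  ((Matrix.isHermitian_conjTranspose_mul_self X).eigenvectorUnitary : Matrix (Fin n₂) (Fin n₂) ℂ)

noncomputable def eigv : Fin n₂ → ℝ :=
  (Matrix.isHermitian_conjTranspose_mul_self X).eigenvalues

lemma eigv_nonneg (j : Fin n₂) : 0 ≤ eigv X j :=
  Matrix.eigenvalues_conjTranspose_mul_self_nonneg X j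

lemma eigW_mul_conj : eigW X * (eigW X)ᴴ = 1 := by
  have h := Matrix.mem_unitaryGroup_iff.mp
    ((Matrix.isHermitian_conjTranspose_mul_self X).eigenvectorUnitary).2
  rw [Matrix.star_eq_conjTranspose] at h
  exact h

lemma conj_mul_eigW : (eigW X)ᴴ * eigW X = 1 := by
  have := eigW_mul_conj X
  rwa [mul_eq_one_comm] at this

lemma spec_decomp : Xᴴ * X = eigW X * Matrix.diagonal (fun j => (eigv X j : ℂ)) * (eigW X)ᴴ := by
  have h := (Matrix.isHermitian_conjTranspose_mul_self X).spectral_theorem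
  rw [Unitary.conjStarAlgAut_apply, Matrix.star_eq_conjTranspose] at h
  exact h

lemma nuc_eq_sum : nucNorm X = ∑ j, Real.sqrt (eigv X j) := by
  rw [nucNorm]
  unfold singVals
  set f : Fin n₂ → ℝ := fun j => Real.sqrt ((Matrix.isHermitian_conjTranspose_mul_self X).eigenvalues j)
  have : ∀ j, f ((Tuple.sort f) (Fin.rev j)) = (f ∘ ((Fin.revPerm).trans (Tuple.sort f))) j := by
    intro j; simp [Equiv.trans]
  calc ∑ j, (f ∘ Tuple.sort f) (Fin.rev j) = ∑ j, (f ∘ ((Fin.revPerm).trans (Tuple.sort f))) j := by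
        exact Finset.sum_congr rfl fun j _ => this j
    _ = ∑ j, f j := Equiv.sum_comp _ f
    _ = ∑ j, Real.sqrt (eigv X j) := rfl

lemma nuc_nonneg : 0 ≤ nucNorm X := by
  rw [nuc_eq_sum]; exact Finset.sum_nonneg fun _ _ => Real.sqrt_nonneg _

end SVD

section SVD2
variable {n₁ n₂ : ℕ}

lemma col_vnsq (A : Matrix (Fin n₁) (Fin n₂) ℂ) (j : Fin n₂) :
    (Aᴴ * A) j j = (vnsq (fun i => A i j) : ℂ) := by
  rw [Matrix.mul_apply, vnsq, Complex.ofReal_sum]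
  exact Finset.sum_congr rfl fun i _ => by
    rw [Matrix.conjTranspose_apply]; exact star_mul_self_eq

lemma trace_eq_sum_eigv (X : Matrix (Fin n₁) (Fin n₂) ℂ) :
    Matrix.trace (Xᴴ * X) = ((∑ j, eigv X j : ℝ) : ℂ) := by
  rw [spec_decomp X, Matrix.trace_mul_cycle, conj_mul_eigW, Matrix.one_mul,
    Matrix.trace_diagonal, Complex.ofReal_sum]

lemma frob_sq_eq (X : Matrix (Fin n₁) (Fin n₂) ℂ) :
    frobNorm X ^ 2 = ∑ j, eigv X j := by
  have h1 : Matrix.trace (Xᴴ * X) = ((∑ i, ∑ j, ‖X i j‖ ^ 2 : ℝ) : ℂ) := by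
    rw [Matrix.trace]
    have : ∀ j : Fin n₂, Matrix.diag (Xᴴ * X) j = ((∑ i, ‖X i j‖ ^ 2 : ℝ) : ℂ) :=
      fun j => col_vnsq X j
    rw [Finset.sum_congr rfl fun j _ => this j, ← Complex.ofReal_sum]
    rw [Finset.sum_comm]
  have h2 := h1.symm.trans (trace_eq_sum_eigv X)
  have h3 : ∑ i, ∑ j, ‖X i j‖ ^ 2 = ∑ j, eigv X j := by
    exact_mod_cast h2
  rw [frobNorm, Real.sq_sqrt (by positivity), h3]

lemma frob_le_nuc (X : Matrix (Fin n₁) (Fin n₂) ℂ) : frobNorm X ≤ nucNorm X := by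
  have h1 : frobNorm X ^ 2 ≤ nucNorm X ^ 2 := by
    rw [frob_sq_eq, nuc_eq_sum]
    calc ∑ j, eigv X j = ∑ j, (Real.sqrt (eigv X j)) ^ 2 := by
          exact Finset.sum_congr rfl fun j _ => (Real.sq_sqrt (eigv_nonneg X j)).symm
      _ ≤ (∑ j, Real.sqrt (eigv X j)) ^ 2 :=
          Finset.sum_sq_le_sq_sum_of_nonneg fun j _ => Real.sqrt_nonneg _
  nlinarith [frob_nonneg X, nuc_nonneg X, h1]

lemma vonNeumann (X G : Matrix (Fin n₁) (Fin n₂) ℂ) (s : ℝ) (hs : 0 ≤ s)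
    (hG : ∀ v, vnsq (G *ᵥ v) ≤ s ^ 2 * vnsq v) :
    ‖Matrix.trace (Gᴴ * X)‖ ≤ s * nucNorm X := by
  set W := eigW X with hW
  have hX1 : Gᴴ * X = Gᴴ * (X * W) * Wᴴ := by
    rw [Matrix.mul_assoc, Matrix.mul_assoc, eigW_mul_conj, Matrix.mul_one]
  have htr : Matrix.trace (Gᴴ * X) = ∑ j, (Wᴴ * (Gᴴ * (X * W))) j j := by
    rw [hX1, Matrix.trace_mul_cycle, Matrix.trace]
    simp only [Matrix.mul_assoc]
    rfl
  have hterm : ∀ j, (Wᴴ * (Gᴴ * (X * W))) j j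
      = star (G *ᵥ (fun k => W k j)) ⬝ᵥ (fun i => (X * W) i j) := by
    intro j
    rw [star_mulVec, ← dotProduct_mulVec]
    simp only [Matrix.mul_apply, dotProduct, Matrix.mulVec, Matrix.conjTranspose_apply,
      Pi.star_apply]
  have hyj : ∀ j, vnsq (fun i => (X * W) i j) = eigv X j := by
    intro j
    have h1 : ((X * W)ᴴ * (X * W)) = Matrix.diagonal (fun j => (eigv X j : ℂ)) := by
      rw [Matrix.conjTranspose_mul, Matrix.mul_assoc, ← Matrix.mul_assoc Xᴴ X W,
        ← Matrix.mul_assoc Wᴴ (Xᴴ * X) W, spec_decomp X]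
      rw [show Wᴴ * (W * Matrix.diagonal (fun j => (eigv X j : ℂ)) * Wᴴ) * W
        = (Wᴴ * W) * Matrix.diagonal (fun j => (eigv X j : ℂ)) * (Wᴴ * W) by
          simp only [Matrix.mul_assoc], conj_mul_eigW]
      simp
    have h2 := col_vnsq (X * W) j
    rw [h1] at h2
    simp only [Matrix.diagonal_apply_eq] at h2
    exact_mod_cast h2.symm
  have hwj : ∀ j, vnsq (fun k => W k j) = 1 := by
    intro j
    have h2 := col_vnsq W j
    rw [conj_mul_eigW] at h2
    simp only [Matrix.one_apply_eq] at h2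
    exact_mod_cast h2.symm
  calc ‖Matrix.trace (Gᴴ * X)‖
      ≤ ∑ j, ‖(Wᴴ * (Gᴴ * (X * W))) j j‖ := by
        rw [htr]; exact norm_sum_le _ _
    _ ≤ ∑ j, s * Real.sqrt (eigv X j) := by
        refine Finset.sum_le_sum fun j _ => ?_
        rw [hterm j]
        refine (cs_dot _ _).trans ?_
        have hl1 : l2norm (G *ᵥ (fun k => W k j)) ≤ s := by
          rw [l2_eq_sqrt_vnsq]
          have hb : vnsq (G *ᵥ fun k => W k j) ≤ s ^ 2 := by
            have := hG (fun k => W k j); rwa [hwj j, mul_one] at this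
          calc Real.sqrt (vnsq (G *ᵥ fun k => W k j)) ≤ Real.sqrt (s ^ 2) :=
                Real.sqrt_le_sqrt hb
            _ = s := Real.sqrt_sq hs
        have hl2 : l2norm (fun i => (X * W) i j) = Real.sqrt (eigv X j) := by
          rw [l2_eq_sqrt_vnsq, hyj j]
        rw [hl2]
        exact mul_le_mul_of_nonneg_right hl1 (Real.sqrt_nonneg _)
    _ = s * nucNorm X := by rw [← Finset.mul_sum, nuc_eq_sum]

end SVD2

section Polar
variable {n₁ n₂ r : ℕ}

noncomputable def Dre {k : ℕ} (t : Fin k → ℝ) : Matrix (Fin k) (Fin k) ℂ :=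
  Matrix.diagonal (fun j => (t j : ℂ))

lemma Dre_conjT {k : ℕ} (t : Fin k → ℝ) : (Dre t)ᴴ = Dre t := by
  have hst : star (fun j => ((t j : ℝ) : ℂ)) = fun j => ((t j : ℝ) : ℂ) :=
    funext fun j => by simp [Pi.star_apply, RCLike.star_def, Complex.conj_ofReal]
  rw [Dre, Matrix.diagonal_conjTranspose, hst]

lemma Dre_mul {k : ℕ} (t s : Fin k → ℝ) : Dre t * Dre s = Dre (fun j => t j * s j) := by
  rw [Dre, Dre, Dre, Matrix.diagonal_mul_diagonal]
  congr 1
  funext j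
  push_cast
  ring

noncomputable def gfun (X : Matrix (Fin n₁) (Fin n₂) ℂ) (j : Fin n₂) : ℝ :=
  (Real.sqrt (eigv X j))⁻¹

noncomputable def chi (X : Matrix (Fin n₁) (Fin n₂) ℂ) (j : Fin n₂) : ℝ :=
  if eigv X j = 0 then 0 else 1

lemma chi_sq (X : Matrix (Fin n₁) (Fin n₂) ℂ) (j : Fin n₂) :
    (1 - chi X j) * (1 - chi X j) = 1 - chi X j := by
  rw [chi]; split <;> norm_num

lemma chi_le_one (X : Matrix (Fin n₁) (Fin n₂) ℂ) (j : Fin n₂) : chi X j ≤ 1 := by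
  rw [chi]; split <;> norm_num

lemma g_mul_nu (X : Matrix (Fin n₁) (Fin n₂) ℂ) (j : Fin n₂) :
    gfun X j * eigv X j = Real.sqrt (eigv X j) := by
  rcases (eigv_nonneg X j).eq_or_lt with h | h
  · simp [gfun, ← h]
  · have hs : Real.sqrt (eigv X j) ≠ 0 := by positivity
    rw [gfun, inv_mul_eq_div, div_eq_iff hs]
    exact (Real.mul_self_sqrt h.le).symm

lemma g_nu_g (X : Matrix (Fin n₁) (Fin n₂) ℂ) (j : Fin n₂) :
    gfun X j * eigv X j * gfun X j = chi X j := by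
  rw [g_mul_nu, chi]
  rcases eq_or_ne (eigv X j) 0 with h | h
  · simp [h]
  · have hs : Real.sqrt (eigv X j) ≠ 0 := by
      have := (eigv_nonneg X j).lt_of_ne (Ne.symm h)
      positivity
    rw [if_neg h, gfun, mul_inv_cancel₀ hs]

noncomputable def polar (X : Matrix (Fin n₁) (Fin n₂) ℂ) : Matrix (Fin n₁) (Fin n₂) ℂ :=
  X * eigW X * Dre (gfun X) * (eigW X)ᴴ

lemma polar_conjT (X : Matrix (Fin n₁) (Fin n₂) ℂ) :
    (polar X)ᴴ = eigW X * Dre (gfun X) * (eigW X)ᴴ * Xᴴ := by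
  simp [polar, Matrix.conjTranspose_mul, Dre_conjT, Matrix.mul_assoc]

lemma polar_conj_mul (X : Matrix (Fin n₁) (Fin n₂) ℂ) :
    (polar X)ᴴ * X = eigW X * Dre (fun j => Real.sqrt (eigv X j)) * (eigW X)ᴴ := by
  rw [polar_conjT]
  simp only [Matrix.mul_assoc]
  rw [show Xᴴ * X = eigW X * (Dre (eigv X) * (eigW X)ᴴ) by
    rw [← Matrix.mul_assoc]; exact spec_decomp X]
  rw [show (eigW X)ᴴ * (eigW X * (Dre (eigv X) * (eigW X)ᴴ)) = Dre (eigv X) * (eigW X)ᴴ by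
    rw [← Matrix.mul_assoc, conj_mul_eigW, Matrix.one_mul]]
  rw [← Matrix.mul_assoc (Dre (gfun X)), Dre_mul]
  rw [show (fun j => gfun X j * eigv X j) = fun j => Real.sqrt (eigv X j) from
    funext fun j => g_mul_nu X j]

lemma trace_polar (X : Matrix (Fin n₁) (Fin n₂) ℂ) :
    Matrix.trace ((polar X)ᴴ * X) = ((nucNorm X : ℝ) : ℂ) := by
  rw [polar_conj_mul, Matrix.trace_mul_cycle, conj_mul_eigW, Matrix.one_mul, Dre,
    Matrix.trace_diagonal, ← Complex.ofReal_sum, nuc_eq_sum]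

lemma polar_conj_mul_polar (X : Matrix (Fin n₁) (Fin n₂) ℂ) :
    (polar X)ᴴ * polar X = eigW X * Dre (chi X) * (eigW X)ᴴ := by
  have h1 : (polar X)ᴴ * polar X = ((polar X)ᴴ * X) * (eigW X * Dre (gfun X) * (eigW X)ᴴ) := by
    rw [polar]
    simp only [Matrix.mul_assoc]
  rw [h1, polar_conj_mul]
  simp only [Matrix.mul_assoc]
  rw [show (eigW X)ᴴ * (eigW X * (Dre (gfun X) * (eigW X)ᴴ)) = Dre (gfun X) * (eigW X)ᴴ by
    rw [← Matrix.mul_assoc, conj_mul_eigW, Matrix.one_mul]]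
  rw [← Matrix.mul_assoc (Dre fun j => Real.sqrt (eigv X j)), Dre_mul]
  have hfe : (fun j => Real.sqrt (eigv X j) * gfun X j) = chi X := by
    funext j
    rw [← g_nu_g X j, ← g_mul_nu X j]
  rw [hfe]

lemma vnsq_isometry {k : ℕ} (Q : Matrix (Fin k) (Fin k) ℂ) (h : Q * Qᴴ = 1)
    (v : Fin k → ℂ) : vnsq (Qᴴ *ᵥ v) = vnsq v := by
  have h1 := vnsq_mulVec Qᴴ v
  rw [conjTranspose_conjTranspose, h, Matrix.one_mulVec, star_dot_self] at h1
  exact_mod_cast h1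

lemma vnsq_quad (X : Matrix (Fin n₁) (Fin n₂) ℂ) (t : Fin n₂ → ℝ)
    (G : Matrix (Fin n₁) (Fin n₂) ℂ) (hGG : Gᴴ * G = eigW X * Dre t * (eigW X)ᴴ)
    (v : Fin n₂ → ℂ) :
    vnsq (G *ᵥ v) = ∑ j, t j * ‖((eigW X)ᴴ *ᵥ v) j‖ ^ 2 := by
  have h1 := vnsq_mulVec G v
  rw [hGG, Dre, quad_diag] at h1
  exact_mod_cast h1

lemma polar_contract (X : Matrix (Fin n₁) (Fin n₂) ℂ) (v : Fin n₂ → ℂ) :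
    vnsq (polar X *ᵥ v) ≤ 1 ^ 2 * vnsq v := by
  rw [vnsq_quad X (chi X) (polar X) (polar_conj_mul_polar X) v, one_pow, one_mul,
    ← vnsq_isometry (eigW X) (eigW_mul_conj X) v]
  rw [show vnsq ((eigW X)ᴴ *ᵥ v) = ∑ j, ‖((eigW X)ᴴ *ᵥ v) j‖ ^ 2 from rfl]
  refine Finset.sum_le_sum fun j _ => ?_
  have h1 : 0 ≤ ‖((eigW X)ᴴ *ᵥ v) j‖ ^ 2 := sq_nonneg _
  nlinarith [chi_le_one X j]

lemma vnsq_quad' {a k : ℕ} (G : Matrix (Fin a) (Fin k) ℂ)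
    (W : Matrix (Fin k) (Fin k) ℂ) (t : Fin k → ℝ)
    (hGG : Gᴴ * G = W * Dre t * Wᴴ) (v : Fin k → ℂ) :
    vnsq (G *ᵥ v) = ∑ j, t j * ‖(Wᴴ *ᵥ v) j‖ ^ 2 := by
  have h1 := vnsq_mulVec G v
  rw [hGG, Dre, quad_diag] at h1
  exact_mod_cast h1

lemma singVals_nonneg (X : Matrix (Fin n₁) (Fin n₂) ℂ) (i : Fin n₂) :
    0 ≤ singVals X i := Real.sqrt_nonneg _

lemma sing_max (h0 : 0 < n₂) (X : Matrix (Fin n₁) (Fin n₂) ℂ) (j : Fin n₂) :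
    Real.sqrt (eigv X j) ≤ singVals X ⟨0, h0⟩ := by
  set f : Fin n₂ → ℝ := fun j => Real.sqrt (eigv X j) with hf
  have h1 : singVals X ⟨0, h0⟩ = (f ∘ Tuple.sort f) (Fin.rev ⟨0, h0⟩) := rfl
  have h2 : ∀ i : Fin n₂, i ≤ Fin.rev ⟨0, h0⟩ := by
    intro i
    rw [Fin.le_def, Fin.rev]
    simp only
    omega
  have h3 : f j = (f ∘ Tuple.sort f) ((Tuple.sort f)⁻¹ j) := by simp
  rw [h1]
  show f j ≤ _
  rw [h3]
  exact Tuple.monotone_sort f (h2 _)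

lemma specnorm_contract (h0 : 0 < n₂) (X : Matrix (Fin n₁) (Fin n₂) ℂ)
    (v : Fin n₂ → ℂ) :
    vnsq (X *ᵥ v) ≤ (singVals X ⟨0, h0⟩) ^ 2 * vnsq v := by
  have hq := vnsq_quad' X (eigW X) (eigv X) (by rw [Dre]; exact spec_decomp X) v
  rw [hq, ← vnsq_isometry (eigW X) (eigW_mul_conj X) v]
  rw [show vnsq ((eigW X)ᴴ *ᵥ v) = ∑ j, ‖((eigW X)ᴴ *ᵥ v) j‖ ^ 2 from rfl]
  rw [Finset.mul_sum]
  refine Finset.sum_le_sum fun j _ => ?_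
  have h1 : eigv X j ≤ (singVals X ⟨0, h0⟩) ^ 2 := by
    have := sing_max h0 X j
    nlinarith [Real.sq_sqrt (eigv_nonneg X j), Real.sqrt_nonneg (eigv X j)]
  exact mul_le_mul_of_nonneg_right h1 (sq_nonneg _)

lemma polar_left_zero (U : Matrix (Fin n₁) (Fin r) ℂ) (X : Matrix (Fin n₁) (Fin n₂) ℂ)
    (h : Uᴴ * X = 0) : Uᴴ * polar X = 0 := by
  rw [polar, ← Matrix.mul_assoc, ← Matrix.mul_assoc, ← Matrix.mul_assoc, h]
  simp [Matrix.zero_mul]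

lemma eig_diag_kill (V : Matrix (Fin n₂) (Fin r) ℂ) (X : Matrix (Fin n₁) (Fin n₂) ℂ)
    (h : X * V = 0) : Dre (eigv X) * ((eigW X)ᴴ * V) = 0 := by
  have h1 : (eigW X)ᴴ * (Xᴴ * X) * V = 0 := by
    rw [Matrix.mul_assoc, Matrix.mul_assoc, h]
    simp [Matrix.mul_zero]
  rw [show (eigW X)ᴴ * (Xᴴ * X) = Dre (eigv X) * (eigW X)ᴴ by
    rw [spec_decomp X, Dre, ← Matrix.mul_assoc, ← Matrix.mul_assoc, conj_mul_eigW,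
      Matrix.one_mul]] at h1
  rw [Matrix.mul_assoc] at h1
  exact h1

lemma chi_diag_kill (V : Matrix (Fin n₂) (Fin r) ℂ) (X : Matrix (Fin n₁) (Fin n₂) ℂ)
    (h : X * V = 0) : Dre (chi X) * ((eigW X)ᴴ * V) = 0 := by
  have hA := eig_diag_kill V X h
  ext j i
  have h2 := congrFun (congrFun hA j) i
  rw [Dre, Matrix.diagonal_mul] at h2 ⊢
  simp only [Matrix.zero_apply] at h2 ⊢
  rcases eq_or_ne (eigv X j) 0 with hz | hz
  · rw [chi, if_pos hz]
    simp
  · rcases mul_eq_zero.mp h2 with h3 | h3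
    · exact absurd (Complex.ofReal_eq_zero.mp h3) hz
    · rw [h3, mul_zero]

lemma polar_right_zero (V : Matrix (Fin n₂) (Fin r) ℂ) (X : Matrix (Fin n₁) (Fin n₂) ℂ)
    (h : X * V = 0) : polar X * V = 0 := by
  have hB : Dre (gfun X) * ((eigW X)ᴴ * V) = 0 := by
    have hA := eig_diag_kill V X h
    ext j i
    have h2 := congrFun (congrFun hA j) i
    rw [Dre, Matrix.diagonal_mul] at h2 ⊢
    simp only [Matrix.zero_apply] at h2 ⊢
    rcases eq_or_ne (eigv X j) 0 with hz | hz
    · rw [gfun, hz]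
      simp
    · rcases mul_eq_zero.mp h2 with h3 | h3
      · exact absurd (Complex.ofReal_eq_zero.mp h3) hz
      · rw [h3, mul_zero]
  rw [polar, Matrix.mul_assoc, Matrix.mul_assoc, hB]
  simp [Matrix.mul_zero]

lemma contract_orthocols (V : Matrix (Fin n₂) (Fin r) ℂ) (hV : Vᴴ * V = 1)
    (x : Fin n₂ → ℂ) : vnsq (Vᴴ *ᵥ x) ≤ vnsq x := by
  have hPP : V * Vᴴ * (V * Vᴴ) = V * Vᴴ := by
    rw [Matrix.mul_assoc, ← Matrix.mul_assoc Vᴴ V Vᴴ, hV, Matrix.one_mul]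
  have h1 : ((1 : Matrix (Fin n₂) (Fin n₂) ℂ) - V * Vᴴ)ᴴ * (1 - V * Vᴴ)
      = 1 - V * Vᴴ := by
    rw [Matrix.conjTranspose_sub, Matrix.conjTranspose_one, Matrix.conjTranspose_mul,
      Matrix.conjTranspose_conjTranspose, Matrix.mul_sub, Matrix.sub_mul, Matrix.sub_mul,
      Matrix.one_mul, Matrix.mul_one, hPP]
    simp
  have h3 := vnsq_mulVec Vᴴ x
  rw [Matrix.conjTranspose_conjTranspose] at h3
  have key : (vnsq ((1 - V * Vᴴ) *ᵥ x) : ℂ) = (vnsq x : ℂ) - (vnsq (Vᴴ *ᵥ x) : ℂ) := by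
    rw [vnsq_mulVec (1 - V * Vᴴ) x, h1, h3, ← star_dot_self x, Matrix.sub_mulVec,
      Matrix.one_mulVec, dotProduct_sub]
  rw [← Complex.ofReal_sub] at key
  have h4 : vnsq ((1 - V * Vᴴ) *ᵥ x) = vnsq x - vnsq (Vᴴ *ᵥ x) := by exact_mod_cast key
  have h5 := vnsq_nonneg ((1 - V * Vᴴ) *ᵥ x)
  linarith

lemma bessel (U : Matrix (Fin n₁) (Fin r) ℂ) (V : Matrix (Fin n₂) (Fin r) ℂ)
    (hU : Uᴴ * U = 1) (hV : Vᴴ * V = 1) (B : Matrix (Fin n₁) (Fin n₂) ℂ)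
    (hUB : Uᴴ * B = 0) (hBV : B * V = 0) (v : Fin n₂ → ℂ) :
    vnsq ((U * Vᴴ + polar B) *ᵥ v) ≤ 1 ^ 2 * vnsq v := by
  set W := eigW B with hWdef
  have hUP : Uᴴ * polar B = 0 := polar_left_zero U B hUB
  have hPU : (polar B)ᴴ * U = 0 := by
    have := congrArg Matrix.conjTranspose hUP
    rwa [Matrix.conjTranspose_mul, Matrix.conjTranspose_conjTranspose,
      Matrix.conjTranspose_zero] at this
  have e1 : V * Uᴴ * (U * Vᴴ) = V * Vᴴ := by
    rw [Matrix.mul_assoc, ← Matrix.mul_assoc Uᴴ U Vᴴ, hU, Matrix.one_mul]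
  have e2 : V * Uᴴ * polar B = 0 := by rw [Matrix.mul_assoc, hUP, Matrix.mul_zero]
  have e3 : (polar B)ᴴ * (U * Vᴴ) = 0 := by
    rw [← Matrix.mul_assoc, hPU, Matrix.zero_mul]
  have hGG : (U * Vᴴ + polar B)ᴴ * (U * Vᴴ + polar B)
      = V * Vᴴ + W * Dre (chi B) * Wᴴ := by
    rw [Matrix.conjTranspose_add, Matrix.conjTranspose_mul,
      Matrix.conjTranspose_conjTranspose, Matrix.add_mul, Matrix.mul_add, Matrix.mul_add,
      e1, e2, e3, polar_conj_mul_polar, add_zero, zero_add]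
  -- decompose the quadratic form
  have hsplit : (vnsq ((U * Vᴴ + polar B) *ᵥ v) : ℂ)
      = (vnsq (Vᴴ *ᵥ v) : ℂ)
        + ((∑ j, chi B j * ‖(Wᴴ *ᵥ v) j‖ ^ 2 : ℝ) : ℂ) := by
    have h2 := vnsq_mulVec (U * Vᴴ + polar B) v
    rw [hGG] at h2
    have h3 := vnsq_mulVec Vᴴ v
    rw [Matrix.conjTranspose_conjTranspose] at h3
    rw [h2, Matrix.add_mulVec, dotProduct_add, ← h3]
    congr 1
    rw [Dre]
    exact quad_diag W (chi B) v
  have hsplitR : vnsq ((U * Vᴴ + polar B) *ᵥ v)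
      = vnsq (Vᴴ *ᵥ v) + ∑ j, chi B j * ‖(Wᴴ *ᵥ v) j‖ ^ 2 := by
    have := hsplit
    rw [← Complex.ofReal_add] at this
    exact_mod_cast this
  -- V-component lives on the kernel part
  have hVW : Vᴴ * W * Dre (chi B) = 0 := by
    have h4 := chi_diag_kill V B hBV
    have h5 := congrArg Matrix.conjTranspose h4
    rw [Matrix.conjTranspose_mul, Matrix.conjTranspose_mul, Dre_conjT,
      Matrix.conjTranspose_conjTranspose, Matrix.conjTranspose_zero] at h5
    exact h5
  have hWfull : Vᴴ * W = Vᴴ * W * Dre (fun j => 1 - chi B j) := by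
    have hsum : Dre (chi B) + Dre (fun j => 1 - chi B j) = 1 := by
      rw [Dre, Dre, Matrix.diagonal_add, ← Matrix.diagonal_one]
      congr 1
      funext j
      push_cast
      ring
    calc Vᴴ * W = Vᴴ * W * (Dre (chi B) + Dre (fun j => 1 - chi B j)) := by
          rw [hsum, Matrix.mul_one]
      _ = Vᴴ * W * Dre (fun j => 1 - chi B j) := by
          rw [Matrix.mul_add, hVW, zero_add]
  set v₀ := (W * Dre (fun j => 1 - chi B j) * Wᴴ) *ᵥ v with hv₀
  have hVv : Vᴴ *ᵥ v = Vᴴ *ᵥ v₀ := by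
    have hv1 : v = (W * Wᴴ) *ᵥ v := by rw [eigW_mul_conj, Matrix.one_mulVec]
    calc Vᴴ *ᵥ v = Vᴴ *ᵥ ((W * Wᴴ) *ᵥ v) := by rw [← hv1]
      _ = ((Vᴴ * W) * Wᴴ) *ᵥ v := by rw [Matrix.mulVec_mulVec, Matrix.mul_assoc]
      _ = ((Vᴴ * W * Dre (fun j => 1 - chi B j)) * Wᴴ) *ᵥ v := by rw [← hWfull]
      _ = Vᴴ *ᵥ v₀ := by
          rw [hv₀, Matrix.mulVec_mulVec]
          congr 1
          simp only [Matrix.mul_assoc]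
  have hquadv0 : vnsq v₀ = ∑ j, (1 - chi B j) * ‖(Wᴴ *ᵥ v) j‖ ^ 2 := by
    have hQ : (W * Dre (fun j => 1 - chi B j) * Wᴴ)ᴴ * (W * Dre (fun j => 1 - chi B j) * Wᴴ)
        = W * Dre (fun j => 1 - chi B j) * Wᴴ := by
      rw [Matrix.conjTranspose_mul, Matrix.conjTranspose_mul, Dre_conjT,
        Matrix.conjTranspose_conjTranspose]
      calc W * (Dre (fun j => 1 - chi B j) * Wᴴ) * (W * Dre (fun j => 1 - chi B j) * Wᴴ)
          = W * (Dre (fun j => 1 - chi B j) * ((Wᴴ * W) * (Dre (fun j => 1 - chi B j) * Wᴴ))) := by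
            simp only [Matrix.mul_assoc]
        _ = W * (Dre (fun j => 1 - chi B j) * (Dre (fun j => 1 - chi B j) * Wᴴ)) := by
            rw [conj_mul_eigW, Matrix.one_mul]
        _ = W * Dre (fun j => 1 - chi B j) * Wᴴ := by
            rw [← Matrix.mul_assoc, ← Matrix.mul_assoc, Matrix.mul_assoc W, Dre_mul,
              show (fun j => (1 - chi B j) * (1 - chi B j)) = fun j => 1 - chi B j from
                funext fun j => chi_sq B j]
    exact vnsq_quad' _ W _ hQ v
  have hbound : vnsq (Vᴴ *ᵥ v) ≤ ∑ j, (1 - chi B j) * ‖(Wᴴ *ᵥ v) j‖ ^ 2 := by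
    rw [hVv, ← hquadv0]
    exact contract_orthocols V hV v₀
  have hc : vnsq v = ∑ j, ‖(Wᴴ *ᵥ v) j‖ ^ 2 := by
    rw [← vnsq_isometry W (eigW_mul_conj B) v]
    rfl
  rw [hsplitR, one_pow, one_mul, hc]
  have : ∀ j ∈ Finset.univ (α := Fin n₂),
      (1 - chi B j) * ‖(Wᴴ *ᵥ v) j‖ ^ 2
        + chi B j * ‖(Wᴴ *ᵥ v) j‖ ^ 2 = ‖(Wᴴ *ᵥ v) j‖ ^ 2 := by
    intro j _; ring
  calc vnsq (Vᴴ *ᵥ v) + ∑ j, chi B j * ‖(Wᴴ *ᵥ v) j‖ ^ 2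
      ≤ ∑ j, (1 - chi B j) * ‖(Wᴴ *ᵥ v) j‖ ^ 2
        + ∑ j, chi B j * ‖(Wᴴ *ᵥ v) j‖ ^ 2 := by linarith [hbound]
    _ = ∑ j, ‖(Wᴴ *ᵥ v) j‖ ^ 2 := by
        rw [← Finset.sum_add_distrib]
        exact Finset.sum_congr rfl this

lemma nuc_le_sum (U : Matrix (Fin n₁) (Fin r) ℂ) (V : Matrix (Fin n₂) (Fin r) ℂ)
    (hU : Uᴴ * U = 1) (hV : Vᴴ * V = 1) (d : Fin r → ℝ) (hd : ∀ i, 0 ≤ d i) :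
    nucNorm (U * Dre d * Vᴴ) ≤ ∑ i, d i := by
  set X := U * Dre d * Vᴴ with hX
  have h1 : nucNorm X = (Matrix.trace ((polar X)ᴴ * X)).re := by
    rw [trace_polar]; simp
  have h2 : Matrix.trace ((polar X)ᴴ * X)
      = Matrix.trace (Vᴴ * ((polar X)ᴴ * U) * Dre d) := by
    calc Matrix.trace ((polar X)ᴴ * X)
        = Matrix.trace ((polar X)ᴴ * U * Dre d * Vᴴ) := by
          rw [show (polar X)ᴴ * X = (polar X)ᴴ * U * Dre d * Vᴴ by
            rw [hX]; simp only [Matrix.mul_assoc]]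
      _ = Matrix.trace (Vᴴ * ((polar X)ᴴ * U) * Dre d) := by
          rw [show (polar X)ᴴ * U * Dre d * Vᴴ = ((polar X)ᴴ * U) * Dre d * Vᴴ from rfl,
            Matrix.trace_mul_cycle]
  have h3 : Matrix.trace (Vᴴ * ((polar X)ᴴ * U) * Dre d)
      = ∑ i, (Vᴴ * ((polar X)ᴴ * U)) i i * (d i : ℂ) := by
    rw [Matrix.trace]
    refine Finset.sum_congr rfl fun i _ => ?_
    show (Vᴴ * ((polar X)ᴴ * U) * Dre d) i i = _
    rw [Dre, Matrix.mul_diagonal]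
  have h4 : ∀ i, ‖(Vᴴ * ((polar X)ᴴ * U)) i i‖ ≤ 1 := by
    intro i
    have he : (Vᴴ * ((polar X)ᴴ * U)) i i
        = star (polar X *ᵥ (fun k => V k i)) ⬝ᵥ (fun a => U a i) := by
      rw [star_mulVec, ← dotProduct_mulVec]
      simp only [Matrix.mul_apply, dotProduct, Matrix.mulVec, Matrix.conjTranspose_apply,
        Pi.star_apply]
    have hv1 : vnsq (fun k => V k i) = 1 := by
      have := col_vnsq V i
      rw [hV] at this
      simp only [Matrix.one_apply_eq] at this
      exact_mod_cast this.symm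
    have hu1 : vnsq (fun a => U a i) = 1 := by
      have := col_vnsq U i
      rw [hU] at this
      simp only [Matrix.one_apply_eq] at this
      exact_mod_cast this.symm
    have hl1 : l2norm (polar X *ᵥ (fun k => V k i)) ≤ 1 := by
      rw [l2_eq_sqrt_vnsq]
      have := polar_contract X (fun k => V k i)
      rw [hv1, one_pow, mul_one] at this
      calc Real.sqrt (vnsq (polar X *ᵥ fun k => V k i)) ≤ Real.sqrt 1 :=
            Real.sqrt_le_sqrt this
        _ = 1 := Real.sqrt_one
    have hl2 : l2norm (fun a => U a i) = 1 := by
      rw [l2_eq_sqrt_vnsq, hu1, Real.sqrt_one]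
    rw [he]
    calc ‖_‖ ≤ l2norm (polar X *ᵥ (fun k => V k i)) * l2norm (fun a => U a i) :=
          cs_dot _ _
      _ ≤ 1 * 1 := by
          rw [hl2]
          exact mul_le_mul_of_nonneg_right hl1 (by norm_num)
      _ = 1 := by norm_num
  rw [h1, h2, h3]
  rw [Complex.re_sum]
  have h5 : ∀ i : Fin r, ((Vᴴ * ((polar X)ᴴ * U)) i i * (d i : ℂ)).re ≤ d i := by
    intro i
    rw [Complex.mul_re]
    simp only [Complex.ofReal_re, Complex.ofReal_im, mul_zero, sub_zero]
    have := Complex.abs_re_le_norm ((Vᴴ * ((polar X)ᴴ * U)) i i)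
    have h6 := h4 i
    have h7 : ((Vᴴ * ((polar X)ᴴ * U)) i i).re ≤ 1 := by
      cases abs_le.mp (this.trans h6); assumption
    calc ((Vᴴ * ((polar X)ᴴ * U)) i i).re * d i ≤ 1 * d i :=
          mul_le_mul_of_nonneg_right h7 (hd i)
      _ = d i := one_mul _
  exact Finset.sum_le_sum fun i _ => h5 i

end Polar

section Tangent
variable {n₁ n₂ r : ℕ} (U : Matrix (Fin n₁) (Fin r) ℂ) (V : Matrix (Fin n₂) (Fin r) ℂ)

lemma UV_mem : U * Vᴴ ∈ tangentSpace U V :=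
  ⟨V, 0, by simp⟩

lemma projT_mem (Z : Matrix (Fin n₁) (Fin n₂) ℂ) : projT U V Z ∈ tangentSpace U V := by
  refine ⟨Zᴴ * U, (Z - U * Uᴴ * Z) * V, ?_⟩
  rw [projT]
  simp only [Matrix.conjTranspose_mul, Matrix.conjTranspose_conjTranspose, Matrix.sub_mul,
    Matrix.mul_assoc]
  abel

lemma perpU (hU : Uᴴ * U = 1) (Z : Matrix (Fin n₁) (Fin n₂) ℂ) :
    Uᴴ * (Z - projT U V Z) = 0 := by
  have hUU : ∀ (K : Matrix (Fin r) (Fin n₂) ℂ), Uᴴ * (U * K) = K := fun K => by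
    rw [← Matrix.mul_assoc, hU, Matrix.one_mul]
  rw [projT]
  simp only [Matrix.mul_sub, Matrix.mul_add, Matrix.mul_assoc, hUU]
  abel

lemma perpV (hV : Vᴴ * V = 1) (Z : Matrix (Fin n₁) (Fin n₂) ℂ) :
    (Z - projT U V Z) * V = 0 := by
  have hVVV : V * Vᴴ * V = V := by rw [Matrix.mul_assoc, hV, Matrix.mul_one]
  have hKV : ∀ (K : Matrix (Fin n₁) (Fin n₂) ℂ), K * (V * Vᴴ) * V = K * V := fun K => by
    rw [Matrix.mul_assoc, Matrix.mul_assoc, ← Matrix.mul_assoc V Vᴴ V, hVVV]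
  rw [projT]
  simp only [Matrix.sub_mul, Matrix.add_mul, hKV]
  abel

lemma trace_tang_perp {T : Matrix (Fin n₁) (Fin n₂) ℂ} (hT : T ∈ tangentSpace U V)
    (C : Matrix (Fin n₁) (Fin n₂) ℂ) (hUC : Uᴴ * C = 0) (hCV : C * V = 0) :
    Matrix.trace (Tᴴ * C) = 0 := by
  obtain ⟨B₁, B₂, rfl⟩ := hT
  rw [Matrix.conjTranspose_add, Matrix.add_mul, Matrix.trace_add]
  have h1 : (U * B₁ᴴ)ᴴ * C = B₁ * (Uᴴ * C) := by
    rw [Matrix.conjTranspose_mul, Matrix.conjTranspose_conjTranspose, Matrix.mul_assoc]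
  have h2 : Matrix.trace ((B₂ * Vᴴ)ᴴ * C) = 0 := by
    rw [Matrix.conjTranspose_mul, Matrix.conjTranspose_conjTranspose,
      Matrix.trace_mul_cycle, hCV, Matrix.zero_mul, Matrix.trace_zero]
  rw [h1, h2, hUC, Matrix.mul_zero, Matrix.trace_zero, add_zero]

lemma trace_perp_tang (C : Matrix (Fin n₁) (Fin n₂) ℂ) (hUC : Uᴴ * C = 0)
    (hCV : C * V = 0) {T : Matrix (Fin n₁) (Fin n₂) ℂ} (hT : T ∈ tangentSpace U V) :
    Matrix.trace (Cᴴ * T) = 0 := by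
  obtain ⟨B₁, B₂, rfl⟩ := hT
  have hCU : Cᴴ * U = 0 := by
    have := congrArg Matrix.conjTranspose hUC
    rwa [Matrix.conjTranspose_mul, Matrix.conjTranspose_conjTranspose,
      Matrix.conjTranspose_zero] at this
  have hVC : Vᴴ * Cᴴ = 0 := by
    have := congrArg Matrix.conjTranspose hCV
    rwa [Matrix.conjTranspose_mul, Matrix.conjTranspose_zero] at this
  rw [Matrix.mul_add, Matrix.trace_add]
  have h1 : Cᴴ * (U * B₁ᴴ) = 0 := by rw [← Matrix.mul_assoc, hCU, Matrix.zero_mul]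
  have h2 : Matrix.trace (Cᴴ * (B₂ * Vᴴ)) = 0 := by
    rw [← Matrix.mul_assoc, Matrix.trace_mul_cycle, hVC, Matrix.zero_mul, Matrix.trace_zero]
  rw [h1, h2, Matrix.trace_zero, add_zero]

end Tangent

section OpNorm
variable {n₁ n₂ m : ℕ}

lemma entry_le_frob (Z : Matrix (Fin n₁) (Fin n₂) ℂ) (i : Fin n₁) (j : Fin n₂) :
    ‖Z i j‖ ≤ frobNorm Z := by
  rw [frobNorm, show ‖Z i j‖ = Real.sqrt (‖Z i j‖ ^ 2) by
    rw [Real.sqrt_sq (norm_nonneg _)]]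
  apply Real.sqrt_le_sqrt
  calc ‖Z i j‖ ^ 2 ≤ ∑ j', ‖Z i j'‖ ^ 2 :=
        Finset.single_le_sum (f := fun j' => ‖Z i j'‖ ^ 2)
          (fun _ _ => sq_nonneg _) (Finset.mem_univ j)
    _ ≤ ∑ i', ∑ j', ‖Z i' j'‖ ^ 2 :=
        Finset.single_le_sum (f := fun i' => ∑ j', ‖Z i' j'‖ ^ 2)
          (fun _ _ => Finset.sum_nonneg fun _ _ => sq_nonneg _) (Finset.mem_univ i)

lemma frob_zero_iff (Z : Matrix (Fin n₁) (Fin n₂) ℂ) (h : frobNorm Z = 0) : Z = 0 := by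
  ext i j
  have h1 : ‖Z i j‖ ≤ 0 := h ▸ entry_le_frob Z i j
  have h2 := norm_nonneg (Z i j)
  have : ‖Z i j‖ = 0 := le_antisymm h1 h2
  simpa using norm_eq_zero.mp this

lemma opA_facts (A : Matrix (Fin n₁) (Fin n₂) ℂ →ₗ[ℂ] (Fin m → ℂ)) (opA : ℝ)
    (hopA : opA = sSup {t : ℝ | ∃ Z : Matrix (Fin n₁) (Fin n₂) ℂ,
      frobNorm Z ≤ 1 ∧ t = l2norm (A Z)}) :
    0 ≤ opA ∧ ∀ Z, l2norm (A Z) ≤ opA * frobNorm Z := by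
  set S := {t : ℝ | ∃ Z : Matrix (Fin n₁) (Fin n₂) ℂ, frobNorm Z ≤ 1 ∧ t = l2norm (A Z)}
    with hS
  have hl2A : ∀ x : Fin m → ℂ, l2norm x = ‖toV x‖ := fun x => l2_eq_norm x
  have hbdd : BddAbove S := by
    refine ⟨∑ p : Fin n₁ × Fin n₂, l2norm (A (Matrix.single p.1 p.2 1)), ?_⟩
    rintro t ⟨Z, hZ1, rfl⟩
    have hdecomp : Z = ∑ p : Fin n₁ × Fin n₂, Z p.1 p.2 • Matrix.single p.1 p.2 1 := by
      conv_lhs => rw [Matrix.matrix_eq_sum_single Z]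
      rw [← Fintype.sum_prod_type']
      refine Finset.sum_congr rfl fun p _ => ?_
      rw [Matrix.smul_single, smul_eq_mul, mul_one]
    have hAZ : A Z = ∑ p : Fin n₁ × Fin n₂, Z p.1 p.2 • A (Matrix.single p.1 p.2 1) := by
      conv_lhs => rw [hdecomp]
      rw [map_sum]
      exact Finset.sum_congr rfl fun p _ => A.map_smul _ _
    rw [hl2A, hAZ]
    have : ‖toV (∑ p : Fin n₁ × Fin n₂, Z p.1 p.2 • A (Matrix.single p.1 p.2 1))‖
        = ‖∑ p : Fin n₁ × Fin n₂, Z p.1 p.2 • toV (A (Matrix.single p.1 p.2 1))‖ := by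
        simp only [toV, WithLp.toLp_sum, WithLp.toLp_smul]
    rw [this]
    calc ‖∑ p : Fin n₁ × Fin n₂, Z p.1 p.2 • toV (A (Matrix.single p.1 p.2 1))‖
        ≤ ∑ p : Fin n₁ × Fin n₂, ‖Z p.1 p.2 • toV (A (Matrix.single p.1 p.2 1))‖ :=
          norm_sum_le _ _
      _ ≤ ∑ p : Fin n₁ × Fin n₂, l2norm (A (Matrix.single p.1 p.2 1)) := by
          refine Finset.sum_le_sum fun p _ => ?_
          rw [norm_smul, ← hl2A]
          calc ‖Z p.1 p.2‖ * l2norm (A (Matrix.single p.1 p.2 1))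
              ≤ 1 * l2norm (A (Matrix.single p.1 p.2 1)) := by
                refine mul_le_mul_of_nonneg_right ?_ (l2_nonneg _)
                exact (entry_le_frob Z p.1 p.2).trans hZ1
            _ = _ := one_mul _
  have h0S : (0 : ℝ) ∈ S := by
    refine ⟨0, ?_, ?_⟩
    · rw [show frobNorm (0 : Matrix (Fin n₁) (Fin n₂) ℂ) = Real.sqrt 0 by
        rw [frobNorm]; congr 1; simp]
      rw [Real.sqrt_zero]; norm_num
    · rw [map_zero]
      rw [show l2norm (0 : Fin m → ℂ) = Real.sqrt 0 by rw [l2norm]; congr 1; simp]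
      rw [Real.sqrt_zero]
  have hopA0 : 0 ≤ opA := hopA ▸ le_csSup hbdd h0S
  refine ⟨hopA0, fun Z => ?_⟩
  rcases eq_or_lt_of_le (frob_nonneg Z) with hz | hz
  · have hZ0 : Z = 0 := frob_zero_iff Z hz.symm
    rw [hZ0, map_zero]
    have hl0 : l2norm (0 : Fin m → ℂ) = 0 := by
      rw [show l2norm (0 : Fin m → ℂ) = Real.sqrt 0 by rw [l2norm]; congr 1; simp]
      exact Real.sqrt_zero
    rw [hl0]
    exact mul_nonneg hopA0 (frob_nonneg _)
  · set s := frobNorm Z with hs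
    have hmem : s⁻¹ * l2norm (A Z) ∈ S := by
      refine ⟨((s⁻¹ : ℝ) : ℂ) • Z, ?_, ?_⟩
      · rw [frob_smul, Complex.norm_real, Real.norm_eq_abs, abs_of_nonneg (inv_nonneg.mpr hz.le), ← hs,
          inv_mul_cancel₀ (ne_of_gt hz)]
      · rw [A.map_smul, l2_smul, Complex.norm_real, Real.norm_eq_abs, abs_of_nonneg (inv_nonneg.mpr hz.le)]
    have hle : s⁻¹ * l2norm (A Z) ≤ opA := hopA ▸ le_csSup hbdd hmem
    calc l2norm (A Z) = s * (s⁻¹ * l2norm (A Z)) := by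
          field_simp
      _ ≤ s * opA := mul_le_mul_of_nonneg_left hle hz.le
      _ = opA * frobNorm Z := by rw [mul_comm, hs]

end OpNorm

lemma l2_neg {m : ℕ} (x : Fin m → ℂ) : l2norm (-x) = l2norm x := by
  rw [l2_eq_norm, l2_eq_norm]
  exact norm_neg (toV x)

lemma l2_sub_le {m : ℕ} (x y : Fin m → ℂ) : l2norm (x - y) ≤ l2norm x + l2norm y := by
  rw [sub_eq_add_neg]
  exact (l2_add_le x (-y)).trans_eq (by rw [l2_neg])

theorem stmt_13 {n₁ n₂ r m : ℕ} (hn₂ : 0 < n₂)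
    (A : Matrix (Fin n₁) (Fin n₂) ℂ →ₗ[ℂ] (Fin m → ℂ))
    (opA : ℝ)
    (hopA : opA = sSup {t : ℝ | ∃ Z : Matrix (Fin n₁) (Fin n₂) ℂ,
      frobNorm Z ≤ 1 ∧ t = l2norm (A Z)})
    (U : Matrix (Fin n₁) (Fin r) ℂ) (V : Matrix (Fin n₂) (Fin r) ℂ)
    (hU : Uᴴ * U = 1) (hV : Vᴴ * V = 1)
    (d : Fin r → ℝ) (hd : ∀ i, 0 < d i)
    (M : Matrix (Fin n₁) (Fin n₂) ℂ)
    (hM : M = U * Matrix.diagonal (fun i => (d i : ℂ)) * Vᴴ)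
    -- (i) A is bounded below on T_M with constant γ > 0
    (γ : ℝ) (hγ : 0 < γ)
    (hlow : ∀ Z ∈ tangentSpace U V, γ * frobNorm Z ≤ l2norm (A Z))
    -- (ii) an approximate dual certificate Y = A*z
    (z : Fin m → ℂ) (Y : Matrix (Fin n₁) (Fin n₂) ℂ)
    (hY : ∀ Z : Matrix (Fin n₁) (Fin n₂) ℂ,
      Matrix.trace (Yᴴ * Z) = ∑ j, (A Z) j * (starRingEnd ℂ) (z j))
    (α₁ α₂ : ℝ)
    (hα₁ : α₁ = frobNorm (U * Vᴴ - projT U V Y))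
    -- α₂ is the spectral norm (largest singular value) of P_{T^⊥} Y
    (hα₂ : α₂ = singVals (Y - projT U V Y) ⟨0, hn₂⟩)
    (hα₂1 : α₂ < 1)
    -- (iii)
    (hcert : α₁ * opA < (1 - α₂) * γ) :
    ∀ Mh : Matrix (Fin n₁) (Fin n₂) ℂ,
      frobNorm (Mh - M) ≤
        (γ + opA) / ((1 - α₂) * γ - α₁ * opA) *
          (nucNorm Mh - nucNorm M +
            ((α₁ + 1 - α₂) / (γ + opA) + l2norm z) * l2norm (A (Mh - M))) := by
  intro Mh
  obtain ⟨hopA0, hAbound⟩ := opA_facts A opA hopA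
  set H : Matrix (Fin n₁) (Fin n₂) ℂ := Mh - M with hH
  set PH : Matrix (Fin n₁) (Fin n₂) ℂ := projT U V H with hPH
  set B : Matrix (Fin n₁) (Fin n₂) ℂ := H - PH with hB
  have hHsum : H = PH + B := by rw [hB]; abel
  have hUB : Uᴴ * B = 0 := perpU U V hU H
  have hBV : B * V = 0 := perpV U V hV H
  have hPHmem : PH ∈ tangentSpace U V := projT_mem U V H
  set PTY : Matrix (Fin n₁) (Fin n₂) ℂ := projT U V Y with hPTY
  set CY : Matrix (Fin n₁) (Fin n₂) ℂ := Y - PTY with hCY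
  have hUCY : Uᴴ * CY = 0 := perpU U V hU Y
  have hCYV : CY * V = 0 := perpV U V hV Y
  have hPTYmem : PTY ∈ tangentSpace U V := projT_mem U V Y
  set G : Matrix (Fin n₁) (Fin n₂) ℂ := U * Vᴴ + polar B with hG
  have hUP : Uᴴ * polar B = 0 := polar_left_zero U B hUB
  have hPV : polar B * V = 0 := polar_right_zero V B hBV
  -- notation for the reals
  set a : ℝ := frobNorm PH with ha
  set b : ℝ := frobNorm B with hb
  set nb : ℝ := nucNorm B with hnb
  set e : ℝ := l2norm (A H) with he
  set lz : ℝ := l2norm z with hlz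
  -- (I1)
  have I1 : frobNorm H ≤ a + b := by
    calc frobNorm H = frobNorm (PH + B) := by rw [← hHsum]
      _ ≤ a + b := frob_add_le PH B
  have I2 : b ≤ nb := frob_le_nuc B
  have nb0 : 0 ≤ nb := nuc_nonneg B
  have a0 : 0 ≤ a := frob_nonneg PH
  have e0 : 0 ≤ e := l2_nonneg _
  have lz0 : 0 ≤ lz := l2_nonneg _
  -- (I3)
  have I3 : γ * a ≤ e + opA * nb := by
    have h1 := hlow PH hPHmem
    have h2 : A PH = A H - A B := by rw [hHsum, map_add]; abel
    have h3 : l2norm (A PH) ≤ e + opA * b := by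
      rw [h2]
      calc l2norm (A H - A B) ≤ l2norm (A H) + l2norm (A B) := l2_sub_le _ _
        _ ≤ e + opA * b := by
            have h5 := hAbound B
            rw [← hb] at h5
            linarith [h5]
    have h4 : opA * b ≤ opA * nb := mul_le_mul_of_nonneg_left I2 hopA0
    linarith [h1, h3, h4]
  -- trace identities
  have E1 : Matrix.trace (Gᴴ * Mh) = Matrix.trace (Gᴴ * M) + Matrix.trace (Gᴴ * H) := by
    rw [← Matrix.trace_add, ← Matrix.mul_add, show M + H = Mh from by rw [hH]; abel]
  have hMtang : M ∈ tangentSpace U V := by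
    refine ⟨0, U * Matrix.diagonal (fun i => (d i : ℂ)), ?_⟩
    rw [hM]
    simp [Matrix.mul_assoc]
  have E2 : Matrix.trace (Gᴴ * M) = ((∑ i, d i : ℝ) : ℂ) := by
    rw [hG, Matrix.conjTranspose_add, Matrix.add_mul, Matrix.trace_add]
    have t2b : Matrix.trace ((polar B)ᴴ * M) = 0 :=
      trace_perp_tang U V (polar B) hUP hPV hMtang
    have t2a : Matrix.trace ((U * Vᴴ)ᴴ * M) = ((∑ i, d i : ℝ) : ℂ) := by
      have hexp : (U * Vᴴ)ᴴ * M = V * Dre d * Vᴴ := by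
        rw [hM, Matrix.conjTranspose_mul, Matrix.conjTranspose_conjTranspose]
        calc V * Uᴴ * (U * Matrix.diagonal (fun i => (d i : ℂ)) * Vᴴ)
            = V * ((Uᴴ * U) * (Matrix.diagonal (fun i => (d i : ℂ)) * Vᴴ)) := by
              simp only [Matrix.mul_assoc]
          _ = V * Dre d * Vᴴ := by
              rw [hU, Matrix.one_mul, Dre, Matrix.mul_assoc]
      rw [hexp, Matrix.trace_mul_cycle, hV, Matrix.one_mul, Dre,
        Matrix.trace_diagonal, Complex.ofReal_sum]
    rw [t2a, t2b, add_zero]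
  -- E3 pieces
  have p1 : Matrix.trace ((polar B)ᴴ * H)
      = ((nucNorm B : ℝ) : ℂ) := by
    have : Matrix.trace ((polar B)ᴴ * H)
        = Matrix.trace ((polar B)ᴴ * PH) + Matrix.trace ((polar B)ᴴ * B) := by
      rw [← Matrix.trace_add, ← Matrix.mul_add, ← hHsum]
    rw [this, trace_perp_tang U V (polar B) hUP hPV hPHmem, trace_polar B, zero_add]
  have p2 : Matrix.trace ((U * Vᴴ)ᴴ * H) = Matrix.trace ((U * Vᴴ)ᴴ * PH) := by
    have hsplit : Matrix.trace ((U * Vᴴ)ᴴ * H)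
        = Matrix.trace ((U * Vᴴ)ᴴ * PH) + Matrix.trace ((U * Vᴴ)ᴴ * B) := by
      rw [← Matrix.trace_add, ← Matrix.mul_add, ← hHsum]
    rw [hsplit, trace_tang_perp U V (UV_mem U V) B hUB hBV, add_zero]
  have p3 : Matrix.trace ((U * Vᴴ)ᴴ * PH)
      = Matrix.trace ((U * Vᴴ - PTY)ᴴ * PH) + Matrix.trace (PTYᴴ * PH) := by
    rw [Matrix.conjTranspose_sub, Matrix.sub_mul, Matrix.trace_sub]
    ring
  have hYsum : Y = PTY + CY := by rw [hCY]; abel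
  have p4 : Matrix.trace (PTYᴴ * PH) = Matrix.trace (Yᴴ * PH) := by
    have h6 : Matrix.trace (Yᴴ * PH)
        = Matrix.trace (PTYᴴ * PH) + Matrix.trace (CYᴴ * PH) := by
      conv_lhs => rw [hYsum]
      rw [Matrix.conjTranspose_add, Matrix.add_mul, Matrix.trace_add]
    rw [h6, trace_perp_tang U V CY hUCY hCYV hPHmem, add_zero]
  have p5 : Matrix.trace (Yᴴ * PH) = Matrix.trace (Yᴴ * H) - Matrix.trace (Yᴴ * B) := by
    rw [← Matrix.trace_sub, ← Matrix.mul_sub]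
    congr 2
    rw [hHsum]
    abel
  have p6 : Matrix.trace (Yᴴ * B) = Matrix.trace (CYᴴ * B) := by
    have h7 : Matrix.trace (Yᴴ * B)
        = Matrix.trace (PTYᴴ * B) + Matrix.trace (CYᴴ * B) := by
      conv_lhs => rw [hYsum]
      rw [Matrix.conjTranspose_add, Matrix.add_mul, Matrix.trace_add]
    rw [h7, trace_tang_perp U V hPTYmem B hUB hBV, zero_add]
  have E3 : Matrix.trace (Gᴴ * H)
      = Matrix.trace ((U * Vᴴ - PTY)ᴴ * PH) + Matrix.trace (Yᴴ * H)
        - Matrix.trace (CYᴴ * B) + ((nucNorm B : ℝ) : ℂ) := by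
    rw [hG, Matrix.conjTranspose_add, Matrix.add_mul, Matrix.trace_add, p1, p2, p3, p4,
      p5, p6]
    ring
  -- real-part bounds
  have r1 : -(α₁ * a) ≤ (Matrix.trace ((U * Vᴴ - PTY)ᴴ * PH)).re := by
    have := re_trace_ge (U * Vᴴ - PTY) PH
    rw [← hα₁] at this
    exact this
  have r2 : -(lz * e) ≤ (Matrix.trace (Yᴴ * H)).re := by
    have h1 := hY H
    have h2 : ‖Matrix.trace (Yᴴ * H)‖ ≤ lz * e := by
      rw [h1, hlz, he]
      exact cs_sum (A H) z
    have h3 := Complex.abs_re_le_norm (Matrix.trace (Yᴴ * H))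
    cases abs_le.mp (h3.trans h2)
    assumption
  have r3 : (Matrix.trace (CYᴴ * B)).re ≤ α₂ * nb := by
    have hcontr : ∀ v, vnsq (CY *ᵥ v) ≤ α₂ ^ 2 * vnsq v := by
      intro v
      rw [hα₂]
      exact specnorm_contract hn₂ (Y - projT U V Y) v
    have hα₂0 : 0 ≤ α₂ := hα₂ ▸ singVals_nonneg _ _
    have h1 := vonNeumann B CY α₂ hα₂0 hcontr
    have h2 := Complex.abs_re_le_norm (Matrix.trace (CYᴴ * B))
    have := h2.trans h1
    cases abs_le.mp this
    rw [← hnb] at *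
    assumption
  have bnd : (Matrix.trace (Gᴴ * Mh)).re ≤ nucNorm Mh := by
    have h1 := vonNeumann Mh G 1 (by norm_num)
      (fun v => by rw [hG]; exact bessel U V hU hV B hUB hBV v)
    rw [one_mul] at h1
    have h2 := Complex.abs_re_le_norm (Matrix.trace (Gᴴ * Mh))
    cases abs_le.mp (h2.trans h1)
    assumption
  have hnucM : nucNorm M ≤ ∑ i, d i := by
    rw [hM]
    exact nuc_le_sum U V hU hV d (fun i => (hd i).le)
  -- combine into J1
  have J1 : (1 - α₂) * nb ≤ (nucNorm Mh - nucNorm M) + α₁ * a + lz * e := by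
    have hre : (Matrix.trace (Gᴴ * Mh)).re
        = (∑ i, d i) + ((Matrix.trace ((U * Vᴴ - PTY)ᴴ * PH)).re
          + (Matrix.trace (Yᴴ * H)).re - (Matrix.trace (CYᴴ * B)).re + nb) := by
      rw [E1, Complex.add_re, E2, E3]
      simp [Complex.add_re, Complex.sub_re, Complex.ofReal_re, hnb]
    have := bnd
    rw [hre] at this
    linarith [r1, r2, r3, hnucM]
  -- final algebra
  set Δ : ℝ := (1 - α₂) * γ - α₁ * opA with hΔdef
  have hΔ : 0 < Δ := by rw [hΔdef]; linarith [hcert]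
  have hSop : 0 < γ + opA := by linarith
  have S1 : γ * (γ + opA) * ((1 - α₂) * nb)
      ≤ γ * (γ + opA) * ((nucNorm Mh - nucNorm M) + α₁ * a + lz * e) :=
    mul_le_mul_of_nonneg_left J1 (by positivity)
  have hα₁0 : 0 ≤ α₁ := hα₁ ▸ frob_nonneg _
  have S2 : (Δ + (γ + opA) * α₁) * (γ * a) ≤ (Δ + (γ + opA) * α₁) * (e + opA * nb) :=
    mul_le_mul_of_nonneg_left I3
      (by have := mul_nonneg hSop.le hα₁0; linarith)
  have key : Δ * frobNorm H
      ≤ (γ + opA) * (nucNorm Mh - nucNorm M) + (α₁ + 1 - α₂) * e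
        + (γ + opA) * (lz * e) := by
    have hfr : Δ * frobNorm H ≤ Δ * (a + nb) := by
      have : frobNorm H ≤ a + nb := by linarith [I1, I2]
      exact mul_le_mul_of_nonneg_left this hΔ.le
    have key2 : γ * (Δ * (a + nb))
        ≤ γ * ((γ + opA) * (nucNorm Mh - nucNorm M) + (α₁ + 1 - α₂) * e
          + (γ + opA) * (lz * e)) := by
      rw [hΔdef] at S2 ⊢
      nlinarith [S1, S2]
    have key3 : Δ * (a + nb)
        ≤ (γ + opA) * (nucNorm Mh - nucNorm M) + (α₁ + 1 - α₂) * e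
          + (γ + opA) * (lz * e) :=
      le_of_mul_le_mul_left (by linarith [key2]) hγ
    linarith [hfr, key3]
  have hRHS : (γ + opA) / Δ *
      ((nucNorm Mh - nucNorm M) + ((α₁ + 1 - α₂) / (γ + opA) + lz) * e)
      = ((γ + opA) * (nucNorm Mh - nucNorm M) + (α₁ + 1 - α₂) * e
        + (γ + opA) * (lz * e)) / Δ := by
    field_simp
    ring
  rw [hRHS, le_div_iff₀ hΔ]
  linarith [key]
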